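/- Any two SIC POVMs in dimension two are unitarily equivalent: if ψ_1, …, ψ_4 and φ_1, …, φ_4 are unit vectors in ℂ² with |⟨ψ_j, ψ_k⟩|² = 1/3 and |⟨φ_j, φ_k⟩|² = 1/3 for all j ≠ k, then there exist a unitary U on ℂ², a permutation π of {1,2,3,4}, and complex numbers c_1, …, c_4 of modulus 1 such that U ψ_j = c_j φ_{π(j)} for all j. -/

import Mathlib

noncomputable section

open Complex Matrix

/-- The standard Hermitian inner product on `ℂ²`, conjugate-linear in the first argument. -/
def inn (x y : Fin 2 → ℂ) : ℂ := ∑ i, (starRingEnd ℂ) (x i) * y i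

set_option maxHeartbeats 1000000
set_option maxRecDepth 8000

lemma inn_conj (x y : Fin 2 → ℂ) : (starRingEnd ℂ) (inn x y) = inn y x := by
  simp [inn, map_sum, mul_comm]

lemma inn_smul_smul (c d : ℂ) (x y : Fin 2 → ℂ) :
    inn (c • x) (d • y) = (starRingEnd ℂ) c * d * inn x y := by
  simp only [inn, Pi.smul_apply, smul_eq_mul, _root_.map_mul, Finset.mul_sum]
  refine Finset.sum_congr rfl fun i _ => by ring

lemma inn_eq_dot (x y : Fin 2 → ℂ) : inn x y = star x ⬝ᵥ y := by
  simp only [inn, dotProduct, Pi.star_apply, starRingEnd_apply]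

lemma inn_sub_right (x y z : Fin 2 → ℂ) : inn x (y - z) = inn x y - inn x z := by
  simp [inn, mul_sub, Finset.sum_sub_distrib]

lemma gram_det_zero {n : Type*} [Fintype n] [DecidableEq n] (h : 2 < Fintype.card n)
    (v : n → Fin 2 → ℂ) : (Matrix.of fun i j => inn (v i) (v j)).det = 0 := by
  have hni : ¬ LinearIndependent ℂ v := by
    intro h'
    have := h'.fintype_card_le_finrank
    rw [Module.finrank_pi, Fintype.card_fin] at this
    omega
  obtain ⟨g, hg, i0, hi0⟩ := Fintype.not_linearIndependent_iff.mp hni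
  rw [← Matrix.exists_mulVec_eq_zero_iff]
  refine ⟨g, fun hgz => hi0 (by rw [hgz]; rfl), ?_⟩
  funext i
  have : ∑ j, inn (v i) (v j) * g j = inn (v i) (∑ j, g j • v j) := by
    simp only [inn, Finset.mul_sum, Finset.sum_apply, Pi.smul_apply, smul_eq_mul]
    rw [Finset.sum_comm]
    refine Finset.sum_congr rfl fun j _ => ?_
    rw [Finset.sum_mul]
    refine Finset.sum_congr rfl fun k _ => by ring
  simp only [Matrix.mulVec, dotProduct, Matrix.of_apply]
  rw [this, hg]
  simp [inn]

def tR : ℝ := Real.sqrt (1/3)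

lemma tR_pos : 0 < tR := Real.sqrt_pos.mpr (by norm_num)

lemma tR_sq : tR ^ 2 = 1/3 := Real.sq_sqrt (by norm_num)

lemma tC_sq : ((tR : ℂ)) ^ 2 = 1/3 := by
  rw [show ((tR : ℂ)) ^ 2 = ((tR ^ 2 : ℝ) : ℂ) by push_cast; ring, tR_sq]
  norm_num

lemma abs_eq_tR {w : ℂ} (h : ‖w‖ ^ 2 = 1/3) : ‖w‖ = tR := by
  have h1 : ‖w‖ ^ 2 = tR ^ 2 := by rw [h, tR_sq]
  nlinarith [norm_nonneg w, tR_pos]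

lemma entry_pm (x y z : Fin 2 → ℂ)
    (hxx : inn x x = 1) (hyy : inn y y = 1) (hzz : inn z z = 1)
    (hxy : inn x y = (tR : ℂ)) (hxz : inn x z = (tR : ℂ))
    (habs : ‖inn y z‖ ^ 2 = 1/3) :
    inn y z = Complex.I * tR ∨ inn y z = -(Complex.I * tR) := by
  set a := inn y z with ha
  have hnormSq : Complex.normSq a = 1/3 := by rw [← Complex.sq_norm]; exact habs
  have haa : a * (starRingEnd ℂ) a = 1/3 := by
    rw [Complex.mul_conj, hnormSq]; norm_num
  have hyx : inn y x = (tR : ℂ) := by rw [← inn_conj, hxy, Complex.conj_ofReal]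
  have hzx : inn z x = (tR : ℂ) := by rw [← inn_conj, hxz, Complex.conj_ofReal]
  have hzy : inn z y = (starRingEnd ℂ) a := by rw [← inn_conj]
  have hdet := gram_det_zero (n := Fin 3) (by norm_num) ![x, y, z]
  rw [Matrix.det_fin_three] at hdet
  simp only [Matrix.of_apply, Matrix.cons_val', Matrix.cons_val_zero, Matrix.cons_val_one,
    Matrix.head_cons, Matrix.cons_val_two, Matrix.tail_cons, Matrix.empty_val',
    Matrix.cons_val_fin_one, Matrix.head_fin_const] at hdet
  rw [hxx, hyy, hzz, hxy, hxz, hyx, hzx, hzy, ← ha] at hdet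
  have hsum : a + (starRingEnd ℂ) a = 0 := by
    linear_combination 3 * hdet + 3 * haa + (6 - 3 * (a + (starRingEnd ℂ) a)) * tC_sq
  have hre : a.re = 0 := by
    have := congrArg Complex.re hsum
    simp only [Complex.add_re, Complex.conj_re, Complex.zero_re] at this
    linarith
  have him : (a.im - tR) * (a.im + tR) = 0 := by
    have h2 : a.re * a.re + a.im * a.im = 1/3 := by
      have := hnormSq; rwa [Complex.normSq_apply] at this
    have := tR_sq
    nlinarith
  rcases mul_eq_zero.mp him with h | h
  · left
    apply Complex.ext <;>
      simp [hre, Complex.mul_re, Complex.mul_im] <;> linarith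
  · right
    apply Complex.ext <;>
      simp [hre, Complex.mul_re, Complex.mul_im] <;> linarith

lemma det_fin_four (A : Matrix (Fin 4) (Fin 4) ℂ) :
    A.det =
      A 0 0*A 1 1*A 2 2*A 3 3 - A 0 0*A 1 1*A 2 3*A 3 2 - A 0 0*A 1 2*A 2 1*A 3 3 +
      A 0 0*A 1 2*A 2 3*A 3 1 + A 0 0*A 1 3*A 2 1*A 3 2 - A 0 0*A 1 3*A 2 2*A 3 1 -
      A 0 1*A 1 0*A 2 2*A 3 3 + A 0 1*A 1 0*A 2 3*A 3 2 + A 0 1*A 1 2*A 2 0*A 3 3 -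
      A 0 1*A 1 2*A 2 3*A 3 0 - A 0 1*A 1 3*A 2 0*A 3 2 + A 0 1*A 1 3*A 2 2*A 3 0 +
      A 0 2*A 1 0*A 2 1*A 3 3 - A 0 2*A 1 0*A 2 3*A 3 1 - A 0 2*A 1 1*A 2 0*A 3 3 +
      A 0 2*A 1 1*A 2 3*A 3 0 + A 0 2*A 1 3*A 2 0*A 3 1 - A 0 2*A 1 3*A 2 1*A 3 0 -
      A 0 3*A 1 0*A 2 1*A 3 2 + A 0 3*A 1 0*A 2 2*A 3 1 + A 0 3*A 1 1*A 2 0*A 3 2 -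
      A 0 3*A 1 1*A 2 2*A 3 0 - A 0 3*A 1 2*A 2 0*A 3 1 + A 0 3*A 1 2*A 2 1*A 3 0 := by
  rw [Matrix.det_succ_row_zero]
  simp [Fin.sum_univ_succ, Matrix.det_fin_three, Matrix.submatrix_apply, Fin.succAbove]
  ring

def G4 : Matrix (Fin 4) (Fin 4) ℂ :=
  !![1, (tR:ℂ), (tR:ℂ), (tR:ℂ);
     (tR:ℂ), 1, Complex.I*(tR:ℂ), -(Complex.I*(tR:ℂ));
     (tR:ℂ), -(Complex.I*(tR:ℂ)), 1, Complex.I*(tR:ℂ);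
     (tR:ℂ), Complex.I*(tR:ℂ), -(Complex.I*(tR:ℂ)), 1]

set_option maxHeartbeats 4000000 in
lemma sic_normalize (ψ : Fin 4 → Fin 2 → ℂ) (hd : ∀ j, inn (ψ j) (ψ j) = 1)
    (h : ∀ j k, j ≠ k → ‖inn (ψ j) (ψ k)‖ ^ 2 = 1/3) :
    ∃ (σ : Equiv.Perm (Fin 4)) (e : Fin 4 → ℂ), (∀ j, ‖e j‖ = 1) ∧
      ∀ j k, inn (e j • ψ (σ j)) (e k • ψ (σ k)) = G4 j k := by
  have habs_u : ∀ j, j ≠ (0 : Fin 4) → ‖inn (ψ 0) (ψ j)‖ = tR :=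
    fun j hj => abs_eq_tR (h 0 j (Ne.symm hj))
  have hu_ne : ∀ j, j ≠ (0 : Fin 4) → inn (ψ 0) (ψ j) ≠ 0 := by
    intro j hj h0
    have := habs_u j hj
    rw [h0] at this
    simp at this
    exact absurd this.symm (ne_of_gt tR_pos)
  set d : Fin 4 → ℂ := fun j => if j = 0 then 1 else (tR:ℂ) / inn (ψ 0) (ψ j) with hd_def
  have habs_d : ∀ j, ‖d j‖ = 1 := by
    intro j
    by_cases hj : j = 0
    · simp [hd_def, hj]
    · simp only [hd_def, if_neg hj, norm_div, Complex.norm_real, Real.norm_eq_abs, habs_u j hj,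
        abs_of_pos tR_pos]
      exact div_self (ne_of_gt tR_pos)
  have Ediag : ∀ j, inn (d j • ψ j) (d j • ψ j) = 1 := by
    intro j
    rw [inn_smul_smul, hd j, mul_one]
    have h1 : Complex.normSq (d j) = 1 := by
      rw [← Complex.sq_norm, habs_d j]; norm_num
    rw [mul_comm, Complex.mul_conj, h1]; norm_num
  have Erow : ∀ j, j ≠ (0 : Fin 4) → inn (d 0 • ψ 0) (d j • ψ j) = (tR:ℂ) := by
    intro j hj
    rw [inn_smul_smul]
    simp only [hd_def, if_pos rfl, if_neg hj, _root_.map_one, one_mul]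
    exact div_mul_cancel₀ _ (hu_ne j hj)
  have Ecol : ∀ j, j ≠ (0 : Fin 4) → inn (d j • ψ j) (d 0 • ψ 0) = (tR:ℂ) := by
    intro j hj
    rw [← inn_conj, Erow j hj, Complex.conj_ofReal]
  have Eabs : ∀ j k, j ≠ k → ‖inn (d j • ψ j) (d k • ψ k)‖ ^ 2 = 1/3 := by
    intro j k hjk
    rw [inn_smul_smul, norm_mul, norm_mul, Complex.norm_conj, habs_d, habs_d, one_mul, one_mul]
    exact h j k hjk
  have h12 := entry_pm (d 0 • ψ 0) (d 1 • ψ 1) (d 2 • ψ 2) (Ediag 0) (Ediag 1) (Ediag 2)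
    (Erow 1 (by decide)) (Erow 2 (by decide)) (Eabs 1 2 (by decide))
  have h13 := entry_pm (d 0 • ψ 0) (d 1 • ψ 1) (d 3 • ψ 3) (Ediag 0) (Ediag 1) (Ediag 3)
    (Erow 1 (by decide)) (Erow 3 (by decide)) (Eabs 1 3 (by decide))
  have h23 := entry_pm (d 0 • ψ 0) (d 2 • ψ 2) (d 3 • ψ 3) (Ediag 0) (Ediag 2) (Ediag 3)
    (Erow 2 (by decide)) (Erow 3 (by decide)) (Eabs 2 3 (by decide))
  have hdet := gram_det_zero (n := Fin 4) (by norm_num)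
    ![d 0 • ψ 0, d 1 • ψ 1, d 2 • ψ 2, d 3 • ψ 3]
  rw [det_fin_four] at hdet
  simp only [Matrix.of_apply, Matrix.cons_val', Matrix.cons_val_zero, Matrix.cons_val_one,
    Matrix.head_cons, Matrix.cons_val_two, Matrix.cons_val_three, Matrix.tail_cons,
    Matrix.empty_val', Matrix.cons_val_fin_one, Matrix.head_fin_const] at hdet
  rw [Ediag 0, Ediag 1, Ediag 2, Ediag 3, Erow 1 (by decide), Erow 2 (by decide),
    Erow 3 (by decide), Ecol 1 (by decide), Ecol 2 (by decide), Ecol 3 (by decide)] at hdet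
  have conj_it : (starRingEnd ℂ) (Complex.I * (tR:ℂ)) = -(Complex.I * (tR:ℂ)) := by
    rw [_root_.map_mul, Complex.conj_I, Complex.conj_ofReal]; ring
  have conj_nit : (starRingEnd ℂ) (-(Complex.I * (tR:ℂ))) = Complex.I * (tR:ℂ) := by
    rw [map_neg, conj_it]; ring
  rcases h12 with hA | hA <;> rcases h13 with hB | hB <;> rcases h23 with hC | hC
  case inl.inl.inl =>
    exfalso
    have E21 : inn (d 2 • ψ 2) (d 1 • ψ 1) = -(Complex.I * (tR:ℂ)) := by
      rw [← inn_conj, hA, conj_it]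
    have E31 : inn (d 3 • ψ 3) (d 1 • ψ 1) = -(Complex.I * (tR:ℂ)) := by
      rw [← inn_conj, hB, conj_it]
    have E32 : inn (d 3 • ψ 3) (d 2 • ψ 2) = -(Complex.I * (tR:ℂ)) := by
      rw [← inn_conj, hC, conj_it]
    rw [hA, hB, hC, E21, E31, E32] at hdet
    exact absurd (show ((-8:ℂ)/9) = 0 by
      linear_combination hdet - ((-17/3 : ℂ) + (tR:ℂ)^2) * tC_sq
        - (3*(tR:ℂ)^2 - (tR:ℂ)^4) * Complex.I_sq) (by norm_num)
  case inl.inl.inr =>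
    exfalso
    have E21 : inn (d 2 • ψ 2) (d 1 • ψ 1) = -(Complex.I * (tR:ℂ)) := by
      rw [← inn_conj, hA, conj_it]
    have E31 : inn (d 3 • ψ 3) (d 1 • ψ 1) = -(Complex.I * (tR:ℂ)) := by
      rw [← inn_conj, hB, conj_it]
    have E32 : inn (d 3 • ψ 3) (d 2 • ψ 2) = Complex.I * (tR:ℂ) := by
      rw [← inn_conj, hC, conj_nit]
    rw [hA, hB, hC, E21, E31, E32] at hdet
    exact absurd (show ((-8:ℂ)/9) = 0 by
      linear_combination hdet - ((-17/3 : ℂ) + (tR:ℂ)^2) * tC_sq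
        - (3*(tR:ℂ)^2 - (tR:ℂ)^4) * Complex.I_sq) (by norm_num)
  case inl.inr.inl =>
    refine ⟨1, d, habs_d, ?_⟩
    intro j k
    have E21 : inn (d 2 • ψ 2) (d 1 • ψ 1) = -(Complex.I * (tR:ℂ)) := by
      rw [← inn_conj, hA, conj_it]
    have E31 : inn (d 3 • ψ 3) (d 1 • ψ 1) = Complex.I * (tR:ℂ) := by
      rw [← inn_conj, hB, conj_nit]
    have E32 : inn (d 3 • ψ 3) (d 2 • ψ 2) = -(Complex.I * (tR:ℂ)) := by
      rw [← inn_conj, hC, conj_it]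
    simp only [Equiv.Perm.coe_one, id_eq]
    fin_cases j <;> fin_cases k <;>
      simp only [G4, Matrix.cons_val', Matrix.cons_val_zero, Matrix.cons_val_one,
        Matrix.head_cons, Matrix.cons_val_two, Matrix.cons_val_three, Matrix.tail_cons,
        Matrix.empty_val', Matrix.cons_val_fin_one, Matrix.head_fin_const, Matrix.of_apply,
        Fin.isValue] <;>
      first
        | exact Ediag 0 | exact Ediag 1 | exact Ediag 2 | exact Ediag 3
        | exact Erow 1 (by decide) | exact Erow 2 (by decide) | exact Erow 3 (by decide)
        | exact Ecol 1 (by decide) | exact Ecol 2 (by decide) | exact Ecol 3 (by decide)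
        | exact hA | exact hB | exact hC | exact E21 | exact E31 | exact E32
  case inl.inr.inr =>
    exfalso
    have E21 : inn (d 2 • ψ 2) (d 1 • ψ 1) = -(Complex.I * (tR:ℂ)) := by
      rw [← inn_conj, hA, conj_it]
    have E31 : inn (d 3 • ψ 3) (d 1 • ψ 1) = Complex.I * (tR:ℂ) := by
      rw [← inn_conj, hB, conj_nit]
    have E32 : inn (d 3 • ψ 3) (d 2 • ψ 2) = Complex.I * (tR:ℂ) := by
      rw [← inn_conj, hC, conj_nit]
    rw [hA, hB, hC, E21, E31, E32] at hdet
    exact absurd (show ((-8:ℂ)/9) = 0 by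
      linear_combination hdet - ((-17/3 : ℂ) + (tR:ℂ)^2) * tC_sq
        - (3*(tR:ℂ)^2 - (tR:ℂ)^4) * Complex.I_sq) (by norm_num)
  case inr.inl.inl =>
    exfalso
    have E21 : inn (d 2 • ψ 2) (d 1 • ψ 1) = Complex.I * (tR:ℂ) := by
      rw [← inn_conj, hA, conj_nit]
    have E31 : inn (d 3 • ψ 3) (d 1 • ψ 1) = -(Complex.I * (tR:ℂ)) := by
      rw [← inn_conj, hB, conj_it]
    have E32 : inn (d 3 • ψ 3) (d 2 • ψ 2) = -(Complex.I * (tR:ℂ)) := by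
      rw [← inn_conj, hC, conj_it]
    rw [hA, hB, hC, E21, E31, E32] at hdet
    exact absurd (show ((-8:ℂ)/9) = 0 by
      linear_combination hdet - ((-17/3 : ℂ) + (tR:ℂ)^2) * tC_sq
        - (3*(tR:ℂ)^2 - (tR:ℂ)^4) * Complex.I_sq) (by norm_num)
  case inr.inl.inr =>
    refine ⟨Equiv.swap 1 2, fun j => d (Equiv.swap (1:Fin 4) 2 j), fun j => habs_d _, ?_⟩
    intro j k
    have E21 : inn (d 2 • ψ 2) (d 1 • ψ 1) = Complex.I * (tR:ℂ) := by
      rw [← inn_conj, hA, conj_nit]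
    have E31 : inn (d 3 • ψ 3) (d 1 • ψ 1) = -(Complex.I * (tR:ℂ)) := by
      rw [← inn_conj, hB, conj_it]
    have E32 : inn (d 3 • ψ 3) (d 2 • ψ 2) = Complex.I * (tR:ℂ) := by
      rw [← inn_conj, hC, conj_nit]
    simp only [show (Equiv.swap (1:Fin 4) 2) 0 = 0 by decide,
      show (Equiv.swap (1:Fin 4) 2) 1 = 2 by decide,
      show (Equiv.swap (1:Fin 4) 2) 2 = 1 by decide,
      show (Equiv.swap (1:Fin 4) 2) 3 = 3 by decide]
    fin_cases j <;> fin_cases k <;>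
      simp only [G4, Matrix.cons_val', Matrix.cons_val_zero, Matrix.cons_val_one,
        Matrix.head_cons, Matrix.cons_val_two, Matrix.cons_val_three, Matrix.tail_cons,
        Matrix.empty_val', Matrix.cons_val_fin_one, Matrix.head_fin_const, Matrix.of_apply,
        Fin.isValue, Fin.reduceFinMk, show (Equiv.swap (1:Fin 4) 2) 0 = 0 by decide,
        show (Equiv.swap (1:Fin 4) 2) 1 = 2 by decide,
        show (Equiv.swap (1:Fin 4) 2) 2 = 1 by decide,
        show (Equiv.swap (1:Fin 4) 2) 3 = 3 by decide] <;>
      first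
        | exact Ediag 0 | exact Ediag 1 | exact Ediag 2 | exact Ediag 3
        | exact Erow 1 (by decide) | exact Erow 2 (by decide) | exact Erow 3 (by decide)
        | exact Ecol 1 (by decide) | exact Ecol 2 (by decide) | exact Ecol 3 (by decide)
        | exact hA | exact hB | exact hC | exact E21 | exact E31 | exact E32
  case inr.inr.inl =>
    exfalso
    have E21 : inn (d 2 • ψ 2) (d 1 • ψ 1) = Complex.I * (tR:ℂ) := by
      rw [← inn_conj, hA, conj_nit]
    have E31 : inn (d 3 • ψ 3) (d 1 • ψ 1) = Complex.I * (tR:ℂ) := by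
      rw [← inn_conj, hB, conj_nit]
    have E32 : inn (d 3 • ψ 3) (d 2 • ψ 2) = -(Complex.I * (tR:ℂ)) := by
      rw [← inn_conj, hC, conj_it]
    rw [hA, hB, hC, E21, E31, E32] at hdet
    exact absurd (show ((-8:ℂ)/9) = 0 by
      linear_combination hdet - ((-17/3 : ℂ) + (tR:ℂ)^2) * tC_sq
        - (3*(tR:ℂ)^2 - (tR:ℂ)^4) * Complex.I_sq) (by norm_num)
  case inr.inr.inr =>
    exfalso
    have E21 : inn (d 2 • ψ 2) (d 1 • ψ 1) = Complex.I * (tR:ℂ) := by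
      rw [← inn_conj, hA, conj_nit]
    have E31 : inn (d 3 • ψ 3) (d 1 • ψ 1) = Complex.I * (tR:ℂ) := by
      rw [← inn_conj, hB, conj_nit]
    have E32 : inn (d 3 • ψ 3) (d 2 • ψ 2) = Complex.I * (tR:ℂ) := by
      rw [← inn_conj, hC, conj_nit]
    rw [hA, hB, hC, E21, E31, E32] at hdet
    exact absurd (show ((-8:ℂ)/9) = 0 by
      linear_combination hdet - ((-17/3 : ℂ) + (tR:ℂ)^2) * tC_sq
        - (3*(tR:ℂ)^2 - (tR:ℂ)^4) * Complex.I_sq) (by norm_num)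

lemma inn_mulVec_unitary (U : Matrix (Fin 2) (Fin 2) ℂ) (h : star U * U = 1)
    (x y : Fin 2 → ℂ) : inn (U.mulVec x) (U.mulVec y) = inn x y := by
  rw [inn_eq_dot, inn_eq_dot, Matrix.star_mulVec, Matrix.dotProduct_mulVec,
    Matrix.vecMul_vecMul, ← Matrix.star_eq_conjTranspose, h, Matrix.vecMul_one]

lemma rigid (χ ω : Fin 4 → Fin 2 → ℂ)
    (hχ : ∀ j k, inn (χ j) (χ k) = G4 j k) (hω : ∀ j k, inn (ω j) (ω k) = G4 j k) :
    ∃ U ∈ Matrix.unitaryGroup (Fin 2) ℂ, ∀ j, U.mulVec (χ j) = ω j := by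
  have key : ∀ (v : Fin 2 → Fin 2 → ℂ) (i j : Fin 2),
      (((Matrix.of fun a b => v b a)ᴴ) * (Matrix.of fun a b => v b a)) i j = inn (v i) (v j) := by
    intro v i j
    rw [Matrix.mul_apply]
    simp only [Matrix.conjTranspose_apply, Matrix.of_apply, inn, starRingEnd_apply]
  set A : Matrix (Fin 2) (Fin 2) ℂ := Matrix.of fun a b => ![χ 0, χ 1] b a with hA_def
  set B : Matrix (Fin 2) (Fin 2) ℂ := Matrix.of fun a b => ![ω 0, ω 1] b a with hB_def
  have hAH : Aᴴ * A = !![(1:ℂ), (tR:ℂ); (tR:ℂ), 1] := by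
    ext i j
    rw [hA_def, key]
    fin_cases i <;> fin_cases j <;>
      simp only [Fin.mk_zero, Fin.mk_one, Fin.isValue, Matrix.cons_val_zero, Matrix.cons_val_one,
        Matrix.head_cons] <;>
      rw [hχ] <;>
      simp [G4, Matrix.cons_val', Matrix.cons_val_zero, Matrix.cons_val_one, Matrix.head_cons,
        Matrix.empty_val', Matrix.cons_val_fin_one, Matrix.head_fin_const]
  have hBH : Bᴴ * B = !![(1:ℂ), (tR:ℂ); (tR:ℂ), 1] := by
    ext i j
    rw [hB_def, key]
    fin_cases i <;> fin_cases j <;>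
      simp only [Fin.mk_zero, Fin.mk_one, Fin.isValue, Matrix.cons_val_zero, Matrix.cons_val_one,
        Matrix.head_cons] <;>
      rw [hω] <;>
      simp [G4, Matrix.cons_val', Matrix.cons_val_zero, Matrix.cons_val_one, Matrix.head_cons,
        Matrix.empty_val', Matrix.cons_val_fin_one, Matrix.head_fin_const]
  have hdet_ne : ∀ (M : Matrix (Fin 2) (Fin 2) ℂ),
      Mᴴ * M = !![(1:ℂ), (tR:ℂ); (tR:ℂ), 1] → M.det ≠ 0 := by
    intro M hM h0
    have h1 : (Mᴴ * M).det = 1 - (tR:ℂ) * (tR:ℂ) := by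
      rw [hM, Matrix.det_fin_two_of]
      ring
    rw [Matrix.det_mul, Matrix.det_conjTranspose, h0] at h1
    simp only [star_zero, mul_zero, zero_mul] at h1
    have h2 : ((tR:ℂ))^2 = 1/3 := tC_sq
    apply (show (0:ℂ) ≠ 2/3 by norm_num)
    linear_combination h1 - h2
  have hdetA := hdet_ne A hAH
  have hdetB := hdet_ne B hBH
  have hUnitA : IsUnit A.det := isUnit_iff_ne_zero.mpr hdetA
  set U : Matrix (Fin 2) (Fin 2) ℂ := B * A⁻¹ with hU_def
  have hU1 : star U * U = 1 := by
    rw [hU_def, Matrix.star_eq_conjTranspose, Matrix.conjTranspose_mul]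
    calc A⁻¹ᴴ * Bᴴ * (B * A⁻¹) = A⁻¹ᴴ * (Bᴴ * B) * A⁻¹ := by
          simp only [Matrix.mul_assoc]
      _ = A⁻¹ᴴ * (Aᴴ * A) * A⁻¹ := by rw [hBH, hAH]
      _ = A⁻¹ᴴ * Aᴴ * (A * A⁻¹) := by simp only [Matrix.mul_assoc]
      _ = (A * A⁻¹)ᴴ * (A * A⁻¹) := by rw [Matrix.conjTranspose_mul]
      _ = 1 := by rw [Matrix.mul_nonsing_inv A hUnitA]; simp
  have hUA : U * A = B := by
    rw [hU_def, Matrix.mul_assoc, Matrix.nonsing_inv_mul A hUnitA, Matrix.mul_one]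
  have hmap : ∀ j : Fin 2, U.mulVec (![χ 0, χ 1] j) = ![ω 0, ω 1] j := by
    intro j
    have hAe : A.mulVec (Pi.single j 1) = ![χ 0, χ 1] j := by
      funext i
      simp [hA_def, Matrix.mulVec_single_one, Matrix.transpose_apply]
    have hBe : B.mulVec (Pi.single j 1) = ![ω 0, ω 1] j := by
      funext i
      simp [hB_def, Matrix.mulVec_single_one, Matrix.transpose_apply]
    rw [← hAe, Matrix.mulVec_mulVec, hUA, hBe]
  have hmap0 : U.mulVec (χ 0) = ω 0 := hmap 0
  have hmap1 : U.mulVec (χ 1) = ω 1 := hmap 1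
  refine ⟨U, Matrix.mem_unitaryGroup_iff'.mpr hU1, ?_⟩
  have hrest : ∀ j : Fin 4, U.mulVec (χ j) = ω j := by
    intro j
    by_contra hne
    set w : Fin 2 → ℂ := U.mulVec (χ j) - ω j with hw_def
    have hw0 : w ≠ 0 := sub_ne_zero.mpr hne
    have hkey : ∀ k : Fin 2, inn (![ω 0, ω 1] k) w = 0 := by
      intro k
      have h1 : inn (![ω 0, ω 1] k) (U.mulVec (χ j)) = inn (![ω 0, ω 1] k) (ω j) := by
        conv_lhs => rw [← hmap k]
        rw [inn_mulVec_unitary U hU1]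
        fin_cases k <;>
          simp only [Fin.mk_zero, Fin.mk_one, Fin.isValue, Matrix.cons_val_zero,
            Matrix.cons_val_one, Matrix.head_cons] <;>
          rw [hχ, hω]
      rw [hw_def, inn_sub_right, h1, sub_self]
    have hBw : Bᴴ.mulVec w = 0 := by
      funext k
      have := hkey k
      rw [inn_eq_dot] at this
      simpa [Matrix.mulVec, dotProduct, Matrix.conjTranspose_apply, hB_def,
        Pi.star_apply] using this
    have : Bᴴ.det = 0 := Matrix.exists_mulVec_eq_zero_iff.mp ⟨w, hw0, hBw⟩
    rw [Matrix.det_conjTranspose, star_eq_zero] at this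
    exact hdetB this
  exact hrest


/-- Any two SIC POVMs in dimension two are unitarily equivalent: for two
families of four unit vectors in `ℂ²` with pairwise squared overlaps `1/3`, some unitary maps
one family onto the other up to a permutation and phases. -/
theorem dim2_sic_unitarily_equivalent (ψ φ : Fin 4 → (Fin 2 → ℂ))
    (hψd : ∀ j, inn (ψ j) (ψ j) = 1)
    (hψ : ∀ j k, j ≠ k → ‖inn (ψ j) (ψ k)‖ ^ 2 = 1 / 3)
    (hφd : ∀ j, inn (φ j) (φ j) = 1)
    (hφ : ∀ j k, j ≠ k → ‖inn (φ j) (φ k)‖ ^ 2 = 1 / 3) :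
    ∃ U ∈ Matrix.unitaryGroup (Fin 2) ℂ, ∃ π : Equiv.Perm (Fin 4), ∃ c : Fin 4 → ℂ,
      ∀ j, ‖c j‖ = 1 ∧ U.mulVec (ψ j) = c j • φ (π j) := by
  obtain ⟨σ₁, e₁, he₁, hg₁⟩ := sic_normalize ψ hψd hψ
  obtain ⟨σ₂, e₂, he₂, hg₂⟩ := sic_normalize φ hφd hφ
  obtain ⟨U, hU, hmap⟩ := rigid (fun j => e₁ j • ψ (σ₁ j)) (fun j => e₂ j • φ (σ₂ j)) hg₁ hg₂
  refine ⟨U, hU, σ₂ * σ₁⁻¹, fun k => (e₁ (σ₁⁻¹ k))⁻¹ * e₂ (σ₁⁻¹ k), ?_⟩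
  intro k
  have hne : e₁ (σ₁⁻¹ k) ≠ 0 := by
    intro h0
    have := he₁ (σ₁⁻¹ k)
    rw [h0] at this
    simp at this
  constructor
  · rw [norm_mul, norm_inv, he₁, he₂]
    norm_num
  · have h := hmap (σ₁⁻¹ k)
    rw [show σ₁ (σ₁⁻¹ k) = k from (Equiv.eq_symm_apply σ₁).mp rfl, Matrix.mulVec_smul] at h
    calc U.mulVec (ψ k)
        = (e₁ (σ₁⁻¹ k))⁻¹ • (e₁ (σ₁⁻¹ k) • U.mulVec (ψ k)) := by
          rw [smul_smul, inv_mul_cancel₀ hne, one_smul]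
      _ = (e₁ (σ₁⁻¹ k))⁻¹ • (e₂ (σ₁⁻¹ k) • φ (σ₂ (σ₁⁻¹ k))) := by rw [h]
      _ = ((e₁ (σ₁⁻¹ k))⁻¹ * e₂ (σ₁⁻¹ k)) • φ ((σ₂ * σ₁⁻¹) k) := by
          rw [smul_smul]; rfl
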